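/- Let H₃ = {h₁, h₂, h₃} over singleton domain {x} and Y = {1,2,3} with h₁(x) = {2,3}, h₂(x) = {1,3}, h₃(x) = {1,2}. The Set-Valued Weighted Majority Algorithm A satisfies, for every T and every sequence (S_t)_{t=1}^T of subsets of Y, E[∑_{t=1}^T 1[ŷ_t ∉ S_t] − min_{h ∈ H₃} ∑_{t=1}^T 1[h(x) ≠ S_t]] ≤ log₂ 3. -/
import Mathlib


/-- The prefix of length `t` of a root-to-leaf path `σ`. -/
def pref {Y : Type} {d : ℕ} (σ : Fin d → Y) (t : Fin d) : Fin t.1 → Y :=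
  fun i => σ ⟨i.1, i.isLt.trans t.isLt⟩

variable {X Y ι : Type} [Fintype Y] [DecidableEq Y] [Fintype ι]

/-- Weights of the Set-Valued Weighted Majority Algorithm after `t` rounds, as a
(deterministic) function of the sequence of predictions `σ` made so far: on a mistake
(`σ` last ∉ `S t`) the weights of hypotheses with `h i (x t) = S t` are doubled; on a
correct prediction the weights of hypotheses with `h i (x t) ≠ S t` are halved. -/
noncomputable def wAlg (h : ι → X → Finset Y) (x : ℕ → X) (S : ℕ → Finset Y) :
    (t : ℕ) → (Fin t → Y) → ι → ℝ
  | 0, _, _ => 1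
  | t + 1, σ, i =>
      if σ (Fin.last t) ∉ S t then
        (if h i (x t) = S t then 2 * wAlg h x S t (fun j => σ j.castSucc) i
         else wAlg h x S t (fun j => σ j.castSucc) i)
      else
        (if h i (x t) = S t then wAlg h x S t (fun j => σ j.castSucc) i
         else wAlg h x S t (fun j => σ j.castSucc) i / 2)

/-- The (unnormalized) probability assigned to label `y` at round `t`. -/
noncomputable def vAlg (h : ι → X → Finset Y) (x : ℕ → X) (S : ℕ → Finset Y)
    (t : ℕ) (σ : Fin t → Y) (y : Y) : ℝ :=
  ∑ i : ι, if y ∈ h i (x t) then wAlg h x S t σ i else 0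

/-- Probability that the algorithm produces the prediction sequence `π` over `T` rounds. -/
noncomputable def probAlg (h : ι → X → Finset Y) (x : ℕ → X) (S : ℕ → Finset Y)
    (T : ℕ) (π : Fin T → Y) : ℝ :=
  ∏ t : Fin T, vAlg h x S t.1 (pref π t) (π t) / (∑ y : Y, vAlg h x S t.1 (pref π t) y)

/-- The three hypotheses of H₃, relabeled to `Fin 3`:
h₁ = {2,3} ↦ {1,2}, h₂ = {1,3} ↦ {0,2}, h₃ = {1,2} ↦ {0,1}. -/
def g : Fin 3 → Unit → Finset (Fin 3)
  | 0 => fun _ => {1, 2}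
  | 1 => fun _ => {0, 2}
  | 2 => fun _ => {0, 1}

-- my lemmas
lemma g_mem (i y : Fin 3) : y ∈ g i () ↔ y ≠ i := by
  fin_cases i <;> fin_cases y <;> decide

lemma wAlg_eq (S : ℕ → Finset (Fin 3)) (T : ℕ) (σ : Fin T → Fin 3) (i : Fin 3) :
    wAlg g (fun _ => ()) S T σ i =
      (2:ℝ) ^ ((∑ t : Fin T, (if σ t ∉ S t.1 then (1:ℤ) else 0)) -
        ∑ t : Fin T, (if g i () ≠ S t.1 then (1:ℤ) else 0)) := by
  induction T with
  | zero => simp [wAlg]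
  | succ T ih =>
    have e1 : ∀ a b : ℤ, (2:ℝ) ^ (a + 1 - b) = 2 * 2 ^ (a - b) := by
      intro a b
      rw [show a + 1 - b = 1 + (a - b) by ring, zpow_add₀ (two_ne_zero)]
      simp
    have e2 : ∀ a b : ℤ, (2:ℝ) ^ (a - (b + 1)) = 2 ^ (a - b) / 2 := by
      intro a b
      rw [show a - (b + 1) = (a - b) + (-1) by ring, zpow_add₀ (two_ne_zero)]
      simp [div_eq_mul_inv]
    rw [Fin.sum_univ_castSucc, Fin.sum_univ_castSucc]
    simp only [wAlg, Fin.coe_castSucc, Fin.val_last]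
    by_cases h1 : σ (Fin.last T) ∉ S T <;> by_cases h2 : g i () = S T <;>
      simp only [h1, h2, if_true, if_false, ite_true, ite_false, not_true, not_false_iff,
        ne_eq, not_not, ite_not, if_pos, if_neg, not_false_eq_true, ih] <;>
      simp [h2, e1, e2, ih]

lemma wAlg_pos (S : ℕ → Finset (Fin 3)) (T : ℕ) (σ : Fin T → Fin 3) (i : Fin 3) :
    0 < wAlg g (fun _ => ()) S T σ i := by
  rw [wAlg_eq]; positivity

lemma key (w : Fin 3 → ℝ) (hw : ∀ i, 0 < w i) (A : Finset (Fin 3)) :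
    ∑ y : Fin 3, (∑ i : Fin 3, if y ∈ g i () then w i else 0) *
      (∑ i : Fin 3, if y ∉ A then (if g i () = A then 2 * w i else w i)
            else (if g i () = A then w i else w i / 2))
    ≤ (∑ y : Fin 3, ∑ i : Fin 3, if y ∈ g i () then w i else 0) * (∑ i : Fin 3, w i) := by
  have h0 := hw 0; have h1 := hw 1; have h2 := hw 2
  have hA := Finset.mem_univ A
  fin_cases hA <;>
    · simp +decide [Fin.sum_univ_three, g]
      nlinarith [mul_pos h0 h1, mul_pos h1 h2, mul_pos h0 h2, sq_nonneg (w 0), sq_nonneg (w 1),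
        sq_nonneg (w 2), sq_nonneg (w 1 + w 2), sq_nonneg (w 0 + w 2), sq_nonneg (w 0 + w 1)]

lemma pref_snoc {Y : Type} {T : ℕ} (τ : Fin T → Y) (y : Y) (u : Fin T) :
    pref (Fin.snoc τ y) u.castSucc = pref τ u := by
  funext i
  show (Fin.snoc τ y : Fin (T+1) → Y) ⟨i.1, _⟩ = τ ⟨i.1, _⟩
  have : (⟨i.1, i.isLt.trans u.castSucc.isLt⟩ : Fin (T+1)) =
      Fin.castSucc ⟨i.1, i.isLt.trans u.isLt⟩ := rfl
  rw [this, Fin.snoc_castSucc]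

lemma pref_snoc_last {Y : Type} {T : ℕ} (τ : Fin T → Y) (y : Y) :
    pref (Fin.snoc τ y) (Fin.last T) = τ := by
  funext i
  show (Fin.snoc τ y : Fin (T+1) → Y) ⟨i.1, _⟩ = τ i
  have : (⟨i.1, i.isLt.trans (Fin.last T).isLt⟩ : Fin (T+1)) = Fin.castSucc i := rfl
  rw [this, Fin.snoc_castSucc]

lemma snoc_cast {Y : Type} {T : ℕ} (τ : Fin T → Y) (y : Y) :
    (fun j : Fin T => (Fin.snoc τ y : Fin (T+1) → Y) j.castSucc) = τ := by
  funext j; rw [Fin.snoc_castSucc]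

lemma wAlg_snoc {X Y ι : Type} [Fintype Y] [DecidableEq Y] [Fintype ι]
    (h : ι → X → Finset Y) (x : ℕ → X) (S : ℕ → Finset Y) (T : ℕ)
    (τ : Fin T → Y) (y : Y) (i : ι) :
    wAlg h x S (T + 1) (Fin.snoc τ y) i =
      if y ∉ S T then
        (if h i (x T) = S T then 2 * wAlg h x S T τ i else wAlg h x S T τ i)
      else
        (if h i (x T) = S T then wAlg h x S T τ i else wAlg h x S T τ i / 2) := by
  show (if (Fin.snoc τ y : Fin (T+1) → Y) (Fin.last T) ∉ S T then _ else _) = _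
  rw [Fin.snoc_last, snoc_cast]

lemma probAlg_snoc {X Y ι : Type} [Fintype Y] [DecidableEq Y] [Fintype ι]
    (h : ι → X → Finset Y) (x : ℕ → X) (S : ℕ → Finset Y) (T : ℕ)
    (τ : Fin T → Y) (y : Y) :
    probAlg h x S (T + 1) (Fin.snoc τ y) =
      probAlg h x S T τ * (vAlg h x S T τ y / ∑ y' : Y, vAlg h x S T τ y') := by
  unfold probAlg
  rw [Fin.prod_univ_castSucc]
  congr 1
  · apply Finset.prod_congr rfl
    intro u _
    rw [pref_snoc, Fin.snoc_castSucc]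
    simp
  · rw [pref_snoc_last, Fin.snoc_last]
    simp

lemma sum_snoc {Y : Type} [Fintype Y] {T : ℕ} (F : (Fin (T+1) → Y) → ℝ) :
    ∑ π : Fin (T+1) → Y, F π = ∑ τ : Fin T → Y, ∑ y : Y, F (Fin.snoc τ y) := by
  rw [← (Fin.snocEquiv (fun _ => Y)).sum_comp F, Fintype.sum_prod_type]
  rw [Finset.sum_comm]
  apply Finset.sum_congr rfl; intro τ _
  apply Finset.sum_congr rfl; intro y _
  rfl

lemma vAlg_nonneg (S : ℕ → Finset (Fin 3)) (T : ℕ) (σ : Fin T → Fin 3) (y : Fin 3) :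
    0 ≤ vAlg g (fun _ => ()) S T σ y := by
  apply Finset.sum_nonneg
  intro i _
  split
  · exact (wAlg_pos S T σ i).le
  · rfl

lemma vSum_pos (S : ℕ → Finset (Fin 3)) (T : ℕ) (σ : Fin T → Fin 3) :
    0 < ∑ y : Fin 3, vAlg g (fun _ => ()) S T σ y := by
  apply Finset.sum_pos'
  · intro y _; exact vAlg_nonneg S T σ y
  · refine ⟨0, Finset.mem_univ _, ?_⟩
    apply Finset.sum_pos'
    · intro i _
      split
      · exact (wAlg_pos S T σ i).le
      · rfl
    · refine ⟨1, Finset.mem_univ _, ?_⟩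
      rw [if_pos (by decide : (0 : Fin 3) ∈ g 1 ())]
      exact wAlg_pos S T σ 1

lemma probAlg_nonneg (S : ℕ → Finset (Fin 3)) (T : ℕ) (π : Fin T → Fin 3) :
    0 ≤ probAlg g (fun _ => ()) S T π := by
  apply Finset.prod_nonneg
  intro t _
  exact div_nonneg (vAlg_nonneg S t.1 _ _) (Finset.sum_nonneg fun y _ => vAlg_nonneg S t.1 _ y)

lemma probSum (S : ℕ → Finset (Fin 3)) (T : ℕ) :
    ∑ π : Fin T → Fin 3, probAlg g (fun _ => ()) S T π = 1 := by
  induction T with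
  | zero => simp [probAlg]
  | succ T ih =>
    rw [sum_snoc]
    have : ∀ τ : Fin T → Fin 3,
        ∑ y : Fin 3, probAlg g (fun _ => ()) S (T+1) (Fin.snoc τ y) =
          probAlg g (fun _ => ()) S T τ := by
      intro τ
      simp only [probAlg_snoc]
      rw [← Finset.mul_sum, ← Finset.sum_div, div_self (vSum_pos S T τ).ne', mul_one]
    simp only [this, ih]

lemma EW_le (S : ℕ → Finset (Fin 3)) (T : ℕ) :
    ∑ π : Fin T → Fin 3, probAlg g (fun _ => ()) S T π *
      (∑ i : Fin 3, wAlg g (fun _ => ()) S T π i) ≤ 3 := by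
  induction T with
  | zero => simp [probAlg, wAlg]
  | succ T ih =>
    rw [sum_snoc]
    refine le_trans (Finset.sum_le_sum ?_) ih
    intro τ _
    simp only [probAlg_snoc]
    have hV := vSum_pos S T τ
    calc ∑ y : Fin 3, probAlg g (fun _ => ()) S T τ *
          (vAlg g (fun _ => ()) S T τ y / ∑ y' : Fin 3, vAlg g (fun _ => ()) S T τ y') *
          (∑ i : Fin 3, wAlg g (fun _ => ()) S (T+1) (Fin.snoc τ y) i)
        = probAlg g (fun _ => ()) S T τ *
            ((∑ y : Fin 3, vAlg g (fun _ => ()) S T τ y *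
              (∑ i : Fin 3, wAlg g (fun _ => ()) S (T+1) (Fin.snoc τ y) i)) /
              (∑ y' : Fin 3, vAlg g (fun _ => ()) S T τ y')) := by
          conv_rhs => rw [Finset.sum_div, Finset.mul_sum]
          apply Finset.sum_congr rfl
          intro y _
          ring
      _ ≤ probAlg g (fun _ => ()) S T τ * (∑ i : Fin 3, wAlg g (fun _ => ()) S T τ i) := by
          apply mul_le_mul_of_nonneg_left _ (probAlg_nonneg S T τ)
          rw [div_le_iff₀ hV]
          have hk := key (wAlg g (fun _ => ()) S T τ) (wAlg_pos S T τ) (S T)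
          calc ∑ y : Fin 3, vAlg g (fun _ => ()) S T τ y *
                (∑ i : Fin 3, wAlg g (fun _ => ()) S (T+1) (Fin.snoc τ y) i)
              = ∑ y : Fin 3, (∑ i : Fin 3,
                  if y ∈ g i () then wAlg g (fun _ => ()) S T τ i else 0) *
                (∑ i : Fin 3, if y ∉ S T then
                    (if g i () = S T then 2 * wAlg g (fun _ => ()) S T τ i
                     else wAlg g (fun _ => ()) S T τ i)
                  else
                    (if g i () = S T then wAlg g (fun _ => ()) S T τ i
                     else wAlg g (fun _ => ()) S T τ i / 2)) := by
                apply Finset.sum_congr rfl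
                intro y _
                congr 1
                apply Finset.sum_congr rfl
                intro i _
                rw [wAlg_snoc]
            _ ≤ _ := by
                refine le_trans hk ?_
                rw [mul_comm]
                rfl

lemma convexOn_two_rpow : ConvexOn ℝ Set.univ (fun x : ℝ => (2:ℝ) ^ x) := by
  have h := convexOn_exp.comp_affineMap
    ((Real.log 2 • LinearMap.id : ℝ →ₗ[ℝ] ℝ).toAffineMap)
  have he : (fun x : ℝ => (2:ℝ) ^ x) =
      (Real.exp ∘ ⇑(Real.log 2 • LinearMap.id : ℝ →ₗ[ℝ] ℝ).toAffineMap) := by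
    funext x
    simp [Real.rpow_def_of_pos two_pos, smul_eq_mul]
  rw [he]
  simpa using h

lemma jensen2 {α : Type} [Fintype α] (p r : α → ℝ) (hp : ∀ a, 0 ≤ p a)
    (hs : ∑ a : α, p a = 1) :
    (2:ℝ) ^ (∑ a : α, p a * r a) ≤ ∑ a : α, p a * (2:ℝ) ^ (r a) := by
  have h := convexOn_two_rpow.map_sum_le (t := Finset.univ) (w := p) (p := r)
    (fun a _ => hp a) hs (fun a _ => Set.mem_univ _)
  simpa [smul_eq_mul] using h

lemma exp_bound (S : ℕ → Finset (Fin 3)) (T : ℕ) (i : Fin 3) :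
    ∑ π : Fin T → Fin 3, probAlg g (fun _ => ()) S T π *
      (2:ℝ) ^ ((∑ t : Fin T, (if π t ∉ S t.1 then (1:ℝ) else 0)) -
        ∑ t : Fin T, (if g i () ≠ S t.1 then (1:ℝ) else 0)) ≤ 3 := by
  calc ∑ π : Fin T → Fin 3, probAlg g (fun _ => ()) S T π *
        (2:ℝ) ^ ((∑ t : Fin T, (if π t ∉ S t.1 then (1:ℝ) else 0)) -
          ∑ t : Fin T, (if g i () ≠ S t.1 then (1:ℝ) else 0))
      = ∑ π : Fin T → Fin 3, probAlg g (fun _ => ()) S T π *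
          wAlg g (fun _ => ()) S T π i := by
        apply Finset.sum_congr rfl
        intro π _
        congr 1
        rw [wAlg_eq S T π i, ← Real.rpow_intCast]
        congr 1
        push_cast [apply_ite (Int.cast : ℤ → ℝ)]
        ring
    _ ≤ ∑ π : Fin T → Fin 3, probAlg g (fun _ => ()) S T π *
          (∑ j : Fin 3, wAlg g (fun _ => ()) S T π j) := by
        apply Finset.sum_le_sum
        intro π _
        apply mul_le_mul_of_nonneg_left _ (probAlg_nonneg S T π)
        exact Finset.single_le_sum (fun j _ => (wAlg_pos S T π j).le) (Finset.mem_univ i)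
    _ ≤ 3 := EW_le S T

lemma regret_bound (S : ℕ → Finset (Fin 3)) (T : ℕ) (i : Fin 3) :
    (∑ π : Fin T → Fin 3, probAlg g (fun _ => ()) S T π *
        ∑ t : Fin T, (if π t ∉ S t.1 then (1 : ℝ) else 0))
      - (∑ t : Fin T, if g i () ≠ S t.1 then (1 : ℝ) else 0) ≤ Real.logb 2 3 := by
  set L : ℝ := ∑ t : Fin T, if g i () ≠ S t.1 then (1 : ℝ) else 0 with hL
  set p : (Fin T → Fin 3) → ℝ := probAlg g (fun _ => ()) S T with hp
  set M : (Fin T → Fin 3) → ℝ := fun π => ∑ t : Fin T, (if π t ∉ S t.1 then (1:ℝ) else 0)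
    with hM
  have hsum : ∑ π : Fin T → Fin 3, p π = 1 := probSum S T
  have h1 : (2:ℝ) ^ ((∑ π : Fin T → Fin 3, p π * M π) - L) ≤ 3 := by
    have : (∑ π : Fin T → Fin 3, p π * M π) - L =
        ∑ π : Fin T → Fin 3, p π * (M π - L) := by
      rw [show ∑ π : Fin T → Fin 3, p π * (M π - L) =
        (∑ π : Fin T → Fin 3, p π * M π) - (∑ π : Fin T → Fin 3, p π) * L by
          rw [Finset.sum_mul, ← Finset.sum_sub_distrib]; apply Finset.sum_congr rfl
          intros; ring, hsum, one_mul]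
    rw [this]
    exact le_trans (jensen2 p (fun π => M π - L) (fun π => probAlg_nonneg S T π) hsum)
      (exp_bound S T i)
  calc (∑ π : Fin T → Fin 3, p π * M π) - L
      = Real.logb 2 ((2:ℝ) ^ ((∑ π : Fin T → Fin 3, p π * M π) - L)) :=
        (Real.logb_rpow (by norm_num) (by norm_num)).symm
    _ ≤ Real.logb 2 3 :=
        Real.logb_le_logb_of_le one_lt_two (Real.rpow_pos_of_pos two_pos _) h1


/-- The Set-Valued Weighted Majority Algorithm on H₃ has expected regret at most log₂ 3. -/
theorem stmt13 (T : ℕ) (S : ℕ → Finset (Fin 3)) :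
    (∑ π : Fin T → Fin 3, probAlg g (fun _ => ()) S T π *
        ∑ t : Fin T, (if π t ∉ S t.1 then (1 : ℝ) else 0))
      - min (min
          (∑ t : Fin T, if ({1, 2} : Finset (Fin 3)) ≠ S t.1 then (1 : ℝ) else 0)
          (∑ t : Fin T, if ({0, 2} : Finset (Fin 3)) ≠ S t.1 then (1 : ℝ) else 0))
          (∑ t : Fin T, if ({0, 1} : Finset (Fin 3)) ≠ S t.1 then (1 : ℝ) else 0)
      ≤ Real.logb 2 3 := by
  have h0 := regret_bound S T 0
  have h1 := regret_bound S T 1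
  have h2 := regret_bound S T 2
  simp only [show g 0 () = {1,2} from rfl, show g 1 () = {0,2} from rfl,
    show g 2 () = {0,1} from rfl] at h0 h1 h2
  rcases min_choice (min
      (∑ t : Fin T, if ({1, 2} : Finset (Fin 3)) ≠ S t.1 then (1 : ℝ) else 0)
      (∑ t : Fin T, if ({0, 2} : Finset (Fin 3)) ≠ S t.1 then (1 : ℝ) else 0))
      (∑ t : Fin T, if ({0, 1} : Finset (Fin 3)) ≠ S t.1 then (1 : ℝ) else 0) with h | h
  · rw [h]
    rcases min_choice
        (∑ t : Fin T, if ({1, 2} : Finset (Fin 3)) ≠ S t.1 then (1 : ℝ) else 0)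
        (∑ t : Fin T, if ({0, 2} : Finset (Fin 3)) ≠ S t.1 then (1 : ℝ) else 0) with h' | h' <;>
      rw [h']
    · exact h0
    · exact h1
  · rw [h]; exact h2
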